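/- Let C > 0, ε > 0, M > 0 and z ∈ ℝ. The function s ↦ (1/(2M))(z − s)² + C·max(0, |s| − ε) on ℝ attains its minimum at a unique point s*, and s* = z − C·M if z ≥ ε + C·M, s* = ε if ε < z < ε + C·M, s* = z if |z| ≤ ε, s* = −ε if −ε − C·M < z < −ε, and s* = z + C·M if z ≤ −ε − C·M. -/

import Mathlib

private lemma stmt_10_key (C ε M z s v : ℝ) (hM : 0 < M) (hv : v * M = z - s)
    (hsub : ∀ t : ℝ, C * max 0 (|s| - ε) + v * (t - s) ≤ C * max 0 (|t| - ε)) :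
    (∀ t : ℝ, (1 / (2 * M)) * (z - s) ^ 2 + C * max 0 (|s| - ε) ≤
        (1 / (2 * M)) * (z - t) ^ 2 + C * max 0 (|t| - ε)) ∧
    (∀ s' : ℝ, (∀ t : ℝ, (1 / (2 * M)) * (z - s') ^ 2 + C * max 0 (|s'| - ε) ≤
        (1 / (2 * M)) * (z - t) ^ 2 + C * max 0 (|t| - ε)) → s' = s) := by
  have hM' : (0:ℝ) < 1 / (2 * M) := by positivity
  have hstrict : ∀ t : ℝ, (1 / (2 * M)) * (z - s) ^ 2 + C * max 0 (|s| - ε)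
      + (1 / (2 * M)) * (t - s) ^ 2 ≤ (1 / (2 * M)) * (z - t) ^ 2 + C * max 0 (|t| - ε) := by
    intro t
    have h := hsub t
    have hq : (1 / (2 * M)) * (z - t) ^ 2 =
        (1 / (2 * M)) * (z - s) ^ 2 - v * (t - s) + (1 / (2 * M)) * (t - s) ^ 2 := by
      have hz : z = v * M + s := by linarith
      subst hz
      field_simp
      ring
    linarith
  constructor
  · intro t
    have h := hstrict t
    nlinarith [sq_nonneg (t - s)]
  · intro s' hs'
    have h1 := hstrict s'
    have h2 := hs' s
    have h3 : 1 / (2 * M) * (s' - s) ^ 2 ≤ 0 := by linarith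
    have h4 : (s' - s) ^ 2 ≤ 0 := by nlinarith
    have h5 : (s' - s) ^ 2 = 0 := le_antisymm h4 (sq_nonneg _)
    have h6 : s' - s = 0 := by
      exact pow_eq_zero_iff two_ne_zero |>.mp h5
    linarith

theorem stmt_10 (C ε M z : ℝ) (hC : 0 < C) (hε : 0 < ε) (hM : 0 < M) :
    ∃ s : ℝ,
      (∀ t : ℝ, (1 / (2 * M)) * (z - s) ^ 2 + C * max 0 (|s| - ε) ≤
        (1 / (2 * M)) * (z - t) ^ 2 + C * max 0 (|t| - ε)) ∧
      (∀ s' : ℝ, (∀ t : ℝ, (1 / (2 * M)) * (z - s') ^ 2 + C * max 0 (|s'| - ε) ≤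
        (1 / (2 * M)) * (z - t) ^ 2 + C * max 0 (|t| - ε)) → s' = s) ∧
      (ε + C * M ≤ z → s = z - C * M) ∧
      (ε < z ∧ z < ε + C * M → s = ε) ∧
      (|z| ≤ ε → s = z) ∧
      (-ε - C * M < z ∧ z < -ε → s = -ε) ∧
      (z ≤ -ε - C * M → s = z + C * M) := by
  have habs : ∀ t : ℝ, t - ε ≤ max 0 (|t| - ε) :=
    fun t => le_trans (by linarith [le_abs_self t]) (le_max_right _ _)
  have habs' : ∀ t : ℝ, -t - ε ≤ max 0 (|t| - ε) :=
    fun t => le_trans (by linarith [neg_abs_le t]) (le_max_right _ _)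
  rcases le_or_gt (ε + C * M) z with h1 | h1
  · -- s = z - C*M, v = C
    set s := z - C * M with hs
    have hspos : ε ≤ s := by simp [hs]; linarith
    have hsabs : max 0 (|s| - ε) = s - ε := by
      rw [abs_of_pos (by linarith), max_eq_right (by linarith)]
    have key := stmt_10_key C ε M z s C hM (by ring)
      (fun t => by rw [hsabs]; nlinarith [habs t])
    refine ⟨s, key.1, key.2, fun _ => rfl, ?_, ?_, ?_, ?_⟩ <;>
      intro h <;> [skip; skip; skip; skip] <;>
      first
        | (exfalso; rcases h with ⟨ha, hb⟩; nlinarith)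
        | (exfalso; have := abs_le.mp h; nlinarith)
        | (exfalso; nlinarith)
  rcases le_or_gt z (-ε - C * M) with h5 | h5
  · -- s = z + C*M, v = -C
    set s := z + C * M with hs
    have hsneg : s ≤ -ε := by simp [hs]; linarith
    have hsabs : max 0 (|s| - ε) = -s - ε := by
      rw [abs_of_neg (by linarith), max_eq_right (by linarith)]
    have key := stmt_10_key C ε M z s (-C) hM (by ring)
      (fun t => by rw [hsabs]; nlinarith [habs' t])
    refine ⟨s, key.1, key.2, ?_, ?_, ?_, ?_, fun _ => rfl⟩ <;>
      intro h <;>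
      first
        | (exfalso; rcases h with ⟨ha, hb⟩; nlinarith)
        | (exfalso; have := abs_le.mp h; nlinarith)
        | (exfalso; nlinarith)
  rcases lt_or_ge ε z with h2 | h2
  · -- s = ε, v = (z - ε)/M
    have hsabs : max 0 (|ε| - ε) = 0 := by
      rw [abs_of_pos hε]; simp
    have key := stmt_10_key C ε M z ε ((z - ε)/M) hM (by field_simp)
      (fun t => by
        rw [hsabs]
        rcases le_or_gt t ε with ht | ht
        · have : (z - ε)/M * (t - ε) ≤ 0 := by
            apply mul_nonpos_of_nonneg_of_nonpos
            · exact div_nonneg (by linarith) hM.le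
            · linarith
          have := le_max_left (0:ℝ) (|t| - ε)
          nlinarith
        · have h3 : t - ε ≤ max 0 (|t| - ε) := habs t
          have h4 : (z - ε)/M ≤ C := by
            rw [div_le_iff₀ hM]; linarith
          have h5 : 0 < (z-ε)/M := div_pos (by linarith) hM
          nlinarith)
    refine ⟨ε, key.1, key.2, ?_, fun _ => rfl, ?_, ?_, ?_⟩ <;>
      intro h <;>
      first
        | (exfalso; rcases h with ⟨ha, hb⟩; nlinarith)
        | (exfalso; have := abs_le.mp h; nlinarith)
        | (exfalso; nlinarith)
  rcases lt_or_ge z (-ε) with h4 | h4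
  · -- s = -ε, v = (z + ε)/M
    have hsabs : max 0 (|-ε| - ε) = 0 := by
      rw [abs_neg, abs_of_pos hε]; simp
    have key := stmt_10_key C ε M z (-ε) ((z + ε)/M) hM (by field_simp; ring)
      (fun t => by
        rw [hsabs]
        rcases le_or_gt (-ε) t with ht | ht
        · have : (z + ε)/M * (t - -ε) ≤ 0 := by
            apply mul_nonpos_of_nonpos_of_nonneg
            · apply div_nonpos_of_nonpos_of_nonneg <;> linarith
            · linarith
          have := le_max_left (0:ℝ) (|t| - ε)
          nlinarith
        · have h3 : -t - ε ≤ max 0 (|t| - ε) := habs' t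
          have h6 : -C ≤ (z + ε)/M := by
            rw [le_div_iff₀ hM]; linarith
          have h7 : (z+ε)/M < 0 := by
            apply div_neg_of_neg_of_pos <;> linarith
          nlinarith)
    refine ⟨-ε, key.1, key.2, ?_, ?_, ?_, fun _ => rfl, ?_⟩ <;>
      intro h <;>
      first
        | (exfalso; rcases h with ⟨ha, hb⟩; nlinarith)
        | (exfalso; have := abs_le.mp h; nlinarith)
        | (exfalso; nlinarith)
  · -- s = z, v = 0, |z| ≤ ε
    have hzabs : |z| ≤ ε := abs_le.mpr ⟨by linarith, h2⟩
    have hsabs : max 0 (|z| - ε) = 0 := max_eq_left (by linarith)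
    have key := stmt_10_key C ε M z z 0 hM (by ring)
      (fun t => by
        rw [hsabs]
        have := le_max_left (0:ℝ) (|t| - ε)
        nlinarith)
    refine ⟨z, key.1, key.2, ?_, ?_, fun _ => rfl, ?_, ?_⟩ <;>
      intro h <;>
      first
        | (exfalso; rcases h with ⟨ha, hb⟩; nlinarith)
        | (exfalso; nlinarith)
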